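/- The Two-Extremes mechanism F(x) = (min x, max x) has approximation ratio exactly n − 2 for the social cost of 2-Facility Location on the line with n ≥ 3 agents: for every instance its social cost is at most (n−2) times the optimal social cost, and there exist instances where this bound is tight (achieved in the limit). -/
import Mathlib


noncomputable section

/-- Cost of an agent at location `a` under a pair of facilities. -/
def fcost (a : ℝ) (y : ℝ × ℝ) : ℝ := min |a - y.1| |a - y.2|

/-- Social cost: sum of the agents' distances to their nearest facility. -/
def scost {n : ℕ} (x : Fin n → ℝ) (y : ℝ × ℝ) : ℝ := ∑ i, fcost (x i) y

/-- Optimal social cost over all placements of two facilities. -/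
def optCost {n : ℕ} (x : Fin n → ℝ) : ℝ := ⨅ y : ℝ × ℝ, scost x y

/-- The mechanism outputs its facilities in increasing order. -/
def Ordered {n : ℕ} (F : (Fin n → ℝ) → ℝ × ℝ) : Prop := ∀ x, (F x).1 ≤ (F x).2

/-- No agent can strictly decrease her cost by misreporting her location. -/
def Strategyproof {n : ℕ} (F : (Fin n → ℝ) → ℝ × ℝ) : Prop :=
  ∀ (x : Fin n → ℝ) (i : Fin n) (y : ℝ),
    fcost (x i) (F x) ≤ fcost (x i) (F (Function.update x i y))

/-- `F` has approximation ratio (at most) `ρ` for the social cost. -/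
def ApproxRatio {n : ℕ} (F : (Fin n → ℝ) → ℝ × ℝ) (ρ : ℝ) : Prop :=
  ∀ x, scost x (F x) ≤ ρ * optCost x

/-- An `(i|j,k)`-well-separated 3-agent instance. -/
def WellSep (ρ : ℝ) (x : Fin 3 → ℝ) (i j k : Fin 3) : Prop :=
  x i < x j ∧ x j < x k ∧ ρ * (x k - x j) < x j - x i

/-- The Two-Extremes mechanism. -/
def TwoExtremes (n : ℕ) : (Fin n → ℝ) → ℝ × ℝ :=
  fun x => (sInf (Set.range x), sSup (Set.range x))


lemma fcost_nonneg' (a : ℝ) (y : ℝ × ℝ) : 0 ≤ fcost a y :=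
  le_min (abs_nonneg _) (abs_nonneg _)

lemma scost_nonneg' {n : ℕ} (x : Fin n → ℝ) (y : ℝ × ℝ) : 0 ≤ scost x y :=
  Finset.sum_nonneg fun _ _ => fcost_nonneg' _ _

lemma keyB' (p m M a b : ℝ) (h1 : m ≤ p) (h2 : p ≤ M) :
    min (p - m) (M - p) ≤ min |p-a| |p-b| + min |m-a| |m-b| + min |M-a| |M-b| := by
  rcases min_choice |p-a| |p-b| with e1|e1 <;>
  rcases min_choice |m-a| |m-b| with e2|e2 <;>
  rcases min_choice |M-a| |M-b| with e3|e3 <;>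
  rw [e1, e2, e3] <;>
  linarith [abs_sub_le p a m, abs_sub_le p b m, abs_sub_le M a p, abs_sub_le M b p,
    abs_sub_le M a m, abs_sub_le M b m,
    le_abs_self (p - m), le_abs_self (M - p), le_abs_self (M - m),
    abs_sub_comm a m, abs_sub_comm b m, abs_sub_comm a p, abs_sub_comm b p,
    min_le_left (p - m) (M - p), min_le_right (p - m) (M - p),
    abs_nonneg (p-a), abs_nonneg (p-b), abs_nonneg (m-a), abs_nonneg (m-b),
    abs_nonneg (M-a), abs_nonneg (M-b)]

lemma keyA' {n : ℕ} (hn : 3 ≤ n) (x : Fin n → ℝ) (y : ℝ × ℝ) :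
    scost x (TwoExtremes n x) ≤ ((n : ℝ) - 2) * scost x y := by
  have : Nonempty (Fin n) := ⟨⟨0, by omega⟩⟩
  have hne : (Set.range x).Nonempty := Set.range_nonempty _
  have hfin : (Set.range x).Finite := Set.finite_range x
  obtain ⟨j, hj⟩ := hne.csInf_mem hfin
  obtain ⟨k, hk⟩ := hne.csSup_mem hfin
  set m := sInf (Set.range x) with hm
  set M := sSup (Set.range x) with hM
  have hmle : ∀ i, m ≤ x i := fun i => csInf_le hfin.bddBelow ⟨i, rfl⟩
  have hMle : ∀ i, x i ≤ M := fun i => le_csSup hfin.bddAbove ⟨i, rfl⟩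
  set S := scost x y with hS
  have hS0 : 0 ≤ S := scost_nonneg' x y
  have hTE : TwoExtremes n x = (m, M) := rfl
  have hcast : (3 : ℝ) ≤ (n : ℝ) := by exact_mod_cast hn
  by_cases hmm : m = M
  · have hz : scost x (TwoExtremes n x) = 0 := by
      rw [hTE]
      apply Finset.sum_eq_zero
      intro i _
      have h1 : x i = m := le_antisymm (hmm ▸ hMle i) (hmle i)
      simp [fcost, h1, hmm]
    rw [hz]
    nlinarith
  · have hjk : j ≠ k := by
      intro h; exact hmm (by rw [← hj, ← hk, h])
    have key : ∀ i, fcost (x i) (m, M) ≤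
        S - (if i = j then S else 0) - (if i = k then S else 0) := by
      intro i
      by_cases hij : i = j
      · have hik : i ≠ k := by rw [hij]; exact hjk
        rw [if_pos hij, if_neg hik]
        have hz : fcost (x i) (m, M) = 0 := by
          rw [fcost, hij, hj]
          simp only [sub_self, abs_zero]
          exact min_eq_left (abs_nonneg _)
        rw [hz]; linarith
      · by_cases hik : i = k
        · rw [if_neg hij, if_pos hik]
          have hz : fcost (x i) (m, M) = 0 := by
            rw [fcost, hik, hk]
            simp only [sub_self, abs_zero]
            exact min_eq_right (abs_nonneg _)
          rw [hz]; linarith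
        · simp only [hij, hik, if_neg, ite_false]
          have hb := keyB' (x i) m M y.1 y.2 (hmle i) (hMle i)
          have h1 : fcost (x i) (m, M) = min (x i - m) (M - x i) := by
            simp only [fcost]
            rw [abs_of_nonneg (by linarith [hmle i]), abs_of_nonpos (by linarith [hMle i])]
            ring_nf
          have h2 : fcost (x i) y + fcost (x j) y + fcost (x k) y ≤ S := by
            have hsub : ({i, j, k} : Finset (Fin n)) ⊆ Finset.univ := Finset.subset_univ _
            have hsum : (∑ l ∈ ({i, j, k} : Finset (Fin n)), fcost (x l) y)
                = fcost (x i) y + (fcost (x j) y + fcost (x k) y) := by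
              rw [Finset.sum_insert (by simp [hij, hik]), Finset.sum_pair hjk]
            calc fcost (x i) y + fcost (x j) y + fcost (x k) y
                = ∑ l ∈ ({i, j, k} : Finset (Fin n)), fcost (x l) y := by rw [hsum]; ring
              _ ≤ ∑ l, fcost (x l) y :=
                  Finset.sum_le_sum_of_subset_of_nonneg hsub (fun l _ _ => fcost_nonneg' _ _)
              _ = S := rfl
          have h3 : fcost (x j) y = min |m - y.1| |m - y.2| := by rw [fcost, hj]
          have h4 : fcost (x k) y = min |M - y.1| |M - y.2| := by rw [fcost, hk]
          have h5 : fcost (x i) y = min |x i - y.1| |x i - y.2| := rfl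
          rw [h1]
          linarith [hb]
    calc scost x (TwoExtremes n x) = ∑ i, fcost (x i) (m, M) := by rw [hTE]; rfl
      _ ≤ ∑ i, (S - (if i = j then S else 0) - (if i = k then S else 0)) :=
          Finset.sum_le_sum (fun i _ => key i)
      _ = (n : ℝ) * S - S - S := by
          rw [Finset.sum_sub_distrib, Finset.sum_sub_distrib, Finset.sum_const,
            Finset.sum_ite_eq' Finset.univ j (fun _ => S),
            Finset.sum_ite_eq' Finset.univ k (fun _ => S)]
          simp [mul_comm]
      _ = ((n : ℝ) - 2) * S := by ring

/-- The Two-Extremes mechanism has approximation ratio exactly `n - 2` for the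
social cost with `n ≥ 3` agents: it is an `(n-2)`-approximation, and no
better ratio is valid for it. -/
theorem twoExtremes_approx_exactly (n : ℕ) (hn : 3 ≤ n) :
    (∀ x : Fin n → ℝ, scost x (TwoExtremes n x) ≤ ((n : ℝ) - 2) * optCost x) ∧
    (∀ ρ : ℝ, (∀ x : Fin n → ℝ, scost x (TwoExtremes n x) ≤ ρ * optCost x) →
      (n : ℝ) - 2 ≤ ρ) := by
  have hn3 : (3 : ℝ) ≤ (n : ℝ) := by exact_mod_cast hn
  have hpos : (0:ℝ) < (n:ℝ) - 2 := by linarith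
  constructor
  · intro x
    have hbdd : BddBelow (Set.range (scost x)) :=
      ⟨0, by rintro v ⟨y, rfl⟩; exact scost_nonneg' x y⟩
    have h1 : scost x (TwoExtremes n x) / ((n:ℝ)-2) ≤ optCost x := by
      apply le_ciInf
      intro y
      rw [div_le_iff₀ hpos, mul_comm]
      exact keyA' hn x y
    have h2 := (div_le_iff₀ hpos).mp h1
    exact h2.trans_eq (mul_comm _ _)
  · intro ρ hρ
    set i0 : Fin n := ⟨0, by omega⟩ with hi0
    set i1 : Fin n := ⟨n-1, by omega⟩ with hi1
    have hne01 : i0 ≠ i1 := by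
      simp only [hi0, hi1, ne_eq, Fin.mk.injEq]
      omega
    set x : Fin n → ℝ := fun i => if i = i0 then 0 else if i = i1 then 3/2 else 1 with hx
    have hxi0 : x i0 = 0 := by simp [hx]
    have hxi1 : x i1 = 3/2 := by simp [hx, hne01.symm]
    have hlb : ∀ i, (0:ℝ) ≤ x i := by
      intro i; rw [hx]; dsimp only; split_ifs <;> norm_num
    have hub' : ∀ i, x i ≤ 3/2 := by
      intro i; rw [hx]; dsimp only; split_ifs <;> norm_num
    have ha : sInf (Set.range x) = 0 :=
      le_antisymm (csInf_le (Set.finite_range x).bddBelow ⟨i0, hxi0⟩)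
        (le_csInf ⟨0, i0, hxi0⟩ (by rintro v ⟨i, rfl⟩; exact hlb i))
    have hb : sSup (Set.range x) = 3/2 :=
      le_antisymm (csSup_le ⟨0, i0, hxi0⟩ (by rintro v ⟨i, rfl⟩; exact hub' i))
        (le_csSup (Set.finite_range x).bddAbove ⟨i1, hxi1⟩)
    have hTE : TwoExtremes n x = ((0:ℝ), (3/2:ℝ)) := by
      show (sInf (Set.range x), sSup (Set.range x)) = _
      rw [ha, hb]
    have hf1 : fcost (1:ℝ) ((0:ℝ), (3/2:ℝ)) = 1/2 := by
      show min |(1:ℝ) - 0| |(1:ℝ) - 3/2| = 1/2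
      rw [abs_of_nonneg (by norm_num : (0:ℝ) ≤ 1 - 0), abs_of_nonpos (by norm_num : (1:ℝ) - 3/2 ≤ 0)]
      rw [show (1:ℝ) - 0 = 1 by ring, show -((1:ℝ) - 3/2) = 1/2 by ring]
      exact min_eq_right (by norm_num)
    have key1 : ∀ i : Fin n,
        (1/2 : ℝ) - (if i = i0 then 1/2 else 0) - (if i = i1 then 1/2 else 0)
          ≤ fcost (x i) ((0:ℝ), (3/2:ℝ)) := by
      intro i
      by_cases h0 : i = i0
      · have h1 : i ≠ i1 := by rw [h0]; exact hne01
        rw [if_pos h0, if_neg h1]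
        have := fcost_nonneg' (x i) ((0:ℝ), (3/2:ℝ))
        linarith
      · by_cases h1 : i = i1
        · rw [if_neg h0, if_pos h1]
          have := fcost_nonneg' (x i) ((0:ℝ), (3/2:ℝ))
          linarith
        · rw [if_neg h0, if_neg h1]
          have hxi : x i = 1 := by simp [hx, h0, h1]
          rw [hxi, hf1]
          norm_num
    have hlow : ((n:ℝ) - 2) * (1/2) ≤ scost x ((0:ℝ), (3/2:ℝ)) := by
      calc ((n:ℝ)-2) * (1/2)
          = ∑ i : Fin n, ((1/2:ℝ) - (if i = i0 then 1/2 else 0) - (if i = i1 then 1/2 else 0)) := by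
            rw [Finset.sum_sub_distrib, Finset.sum_sub_distrib, Finset.sum_const,
              Finset.sum_ite_eq' Finset.univ i0 (fun _ => (1/2:ℝ)),
              Finset.sum_ite_eq' Finset.univ i1 (fun _ => (1/2:ℝ))]
            simp
            ring
        _ ≤ scost x ((0:ℝ), (3/2:ℝ)) := Finset.sum_le_sum fun i _ => key1 i
    have key2 : ∀ i : Fin n, fcost (x i) ((0:ℝ), (1:ℝ)) ≤ (if i = i1 then (1/2:ℝ) else 0) := by
      intro i
      by_cases h1 : i = i1
      · rw [if_pos h1, h1, hxi1, fcost]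
        refine le_trans (min_le_right _ _) ?_
        rw [abs_of_nonneg (by norm_num : (0:ℝ) ≤ 3/2 - 1)]
        norm_num
      · rw [if_neg h1]
        by_cases h0 : i = i0
        · rw [h0, hxi0, fcost]
          refine le_trans (min_le_left _ _) ?_
          norm_num
        · have hxi : x i = 1 := by simp [hx, h0, h1]
          rw [hxi, fcost]
          refine le_trans (min_le_right _ _) ?_
          norm_num
    have hub : scost x ((0:ℝ), (1:ℝ)) ≤ 1/2 := by
      calc scost x ((0:ℝ), (1:ℝ)) ≤ ∑ i : Fin n, (if i = i1 then (1/2:ℝ) else 0) :=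
            Finset.sum_le_sum fun i _ => key2 i
        _ = 1/2 := by rw [Finset.sum_ite_eq' Finset.univ i1 (fun _ => (1/2:ℝ))]; simp
    have hbdd : BddBelow (Set.range (scost x)) :=
      ⟨0, by rintro v ⟨y, rfl⟩; exact scost_nonneg' x y⟩
    have hopt : optCost x ≤ 1/2 := le_trans (ciInf_le hbdd ((0:ℝ), (1:ℝ))) hub
    have hoptnn : (0:ℝ) ≤ optCost x := le_ciInf fun y => scost_nonneg' x y
    have hmain := hρ x
    rw [hTE] at hmain
    have h1 : ((n:ℝ)-2) * (1/2) ≤ ρ * optCost x := le_trans hlow hmain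
    have hρ0 : 0 ≤ ρ := by
      by_contra h
      push_neg at h
      nlinarith
    nlinarith [mul_le_mul_of_nonneg_left hopt hρ0]
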